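/- Let q be a primitive m-th root of unity in K, set n = m if m is odd and n = m/2 if m is even, and let N be a finite-dimensional simple right A_q(M₂)-module such that u22 acts injectively on N and the central element u21^n acts on N as multiplication by a nonzero scalar β. Then dim_K N = n; indeed, for any common eigenvector v of u11, u22, u12·u21, u12^n, u21^n in N, the vectors v, v·u21, …, v·u21^{n−1} form a K-basis of N. -/

import Mathlib

noncomputable section

open FreeAlgebra MulOpposite

/-- The relations of the reflection equation algebra of rank 2:
`u11·u22 = u22·u11`, `u22·u12 = q²·u12·u22`, `u21·u22 = q²·u22·u21`,
`u11·u12 = u12·(u11 + (q^{−2}−1)·u22)`, `u21·u11 = (u11 + (q^{−2}−1)·u22)·u21`,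
`u21·u12 − u12·u21 = (q^{−2}−1)·u22·(u22 − u11)`, where the generators
`u11, u12, u21, u22` are the images of `0, 1, 2, 3 : Fin 4`. -/
inductive REArel {K : Type*} [Field K] (q : K) :
    FreeAlgebra K (Fin 4) → FreeAlgebra K (Fin 4) → Prop
  | r1 : REArel q (ι K (0 : Fin 4) * ι K (3 : Fin 4)) (ι K (3 : Fin 4) * ι K (0 : Fin 4))
  | r2 : REArel q (ι K (3 : Fin 4) * ι K (1 : Fin 4))
      (q ^ 2 • (ι K (1 : Fin 4) * ι K (3 : Fin 4)))
  | r3 : REArel q (ι K (2 : Fin 4) * ι K (3 : Fin 4))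
      (q ^ 2 • (ι K (3 : Fin 4) * ι K (2 : Fin 4)))
  | r4 : REArel q (ι K (0 : Fin 4) * ι K (1 : Fin 4))
      (ι K (1 : Fin 4) * (ι K (0 : Fin 4) + (q⁻¹ ^ 2 - 1) • ι K (3 : Fin 4)))
  | r5 : REArel q (ι K (2 : Fin 4) * ι K (0 : Fin 4))
      ((ι K (0 : Fin 4) + (q⁻¹ ^ 2 - 1) • ι K (3 : Fin 4)) * ι K (2 : Fin 4))
  | r6 : REArel q (ι K (2 : Fin 4) * ι K (1 : Fin 4))
      (ι K (1 : Fin 4) * ι K (2 : Fin 4) +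
        (q⁻¹ ^ 2 - 1) • (ι K (3 : Fin 4) * (ι K (3 : Fin 4) - ι K (0 : Fin 4))))

/-- The reflection equation algebra `A_q(M₂)` of rank 2: the quotient of the free
`K`-algebra on four generators by the two-sided ideal generated by the relations above. -/
abbrev REA {K : Type*} [Field K] (q : K) := RingQuot (REArel q)

variable {K : Type*} [Field K]

/-- The generator `u11` of `A_q(M₂)`. -/
def u11 (q : K) : REA q := RingQuot.mkAlgHom K (REArel q) (ι K (0 : Fin 4))
/-- The generator `u12` of `A_q(M₂)`. -/
def u12 (q : K) : REA q := RingQuot.mkAlgHom K (REArel q) (ι K (1 : Fin 4))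
/-- The generator `u21` of `A_q(M₂)`. -/
def u21 (q : K) : REA q := RingQuot.mkAlgHom K (REArel q) (ι K (2 : Fin 4))
/-- The generator `u22` of `A_q(M₂)`. -/
def u22 (q : K) : REA q := RingQuot.mkAlgHom K (REArel q) (ι K (3 : Fin 4))

set_option linter.unusedSectionVars false

variable (q : K)

lemma rel_ad : u11 q * u22 q = u22 q * u11 q := by
  rw [u11, u22, ← map_mul, ← map_mul]
  exact RingQuot.mkAlgHom_rel K REArel.r1

lemma rel_db : u22 q * u12 q = q ^ 2 • (u12 q * u22 q) := by
  have h := RingQuot.mkAlgHom_rel K (REArel.r2 (q := q))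
  simp only [map_mul, map_smul] at h
  simpa [u22, u12] using h

lemma rel_cd : u21 q * u22 q = q ^ 2 • (u22 q * u21 q) := by
  have h := RingQuot.mkAlgHom_rel K (REArel.r3 (q := q))
  simp only [map_mul, map_smul] at h
  simpa [u21, u22] using h

lemma rel_ab : u11 q * u12 q = u12 q * (u11 q + (q⁻¹ ^ 2 - 1) • u22 q) := by
  have h := RingQuot.mkAlgHom_rel K (REArel.r4 (q := q))
  simp only [map_mul, map_smul, map_add] at h
  simpa [u11, u12, u22] using h

lemma rel_ca : u21 q * u11 q = (u11 q + (q⁻¹ ^ 2 - 1) • u22 q) * u21 q := by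
  have h := RingQuot.mkAlgHom_rel K (REArel.r5 (q := q))
  simp only [map_mul, map_smul, map_add] at h
  simpa [u21, u11, u22] using h

lemma rel_cb : u21 q * u12 q =
    u12 q * u21 q + (q⁻¹ ^ 2 - 1) • (u22 q * (u22 q - u11 q)) := by
  have h := RingQuot.mkAlgHom_rel K (REArel.r6 (q := q))
  simp only [map_mul, map_smul, map_add, map_sub] at h
  simpa [u21, u12, u11, u22] using h

section
variable {K : Type*} [Field K] {A : Type*} [Ring A] [Algebra K A]
variable {N : Type*} [AddCommGroup N] [Module K N] [Module Aᵐᵒᵖ N] [IsScalarTower K Aᵐᵒᵖ N]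

lemma act_mul (x y : A) (w : N) : op (x * y) • w = op y • (op x • w) := by
  rw [op_mul, mul_smul]

lemma act_add (x y : A) (w : N) : op (x + y) • w = op x • w + op y • w := by
  rw [op_add, add_smul]

lemma act_sub (x y : A) (w : N) : op (x - y) • w = op x • w - op y • w := by
  rw [op_sub, sub_smul]

lemma act_one (w : N) : op (1 : A) • w = w := by rw [op_one, one_smul]

end

section Seq
variable {K : Type*} [Field K]

/-- eigenvalue sequence for `u11`. -/
def aS (q lam α δ : K) : ℕ → K
  | 0 => α
  | r + 1 => aS q lam α δ r + lam * (q ^ (2 * r) * δ)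

/-- coefficient sequence for the `u12` action. -/
def kS (q lam α δ μ : K) : ℕ → K
  | 0 => μ
  | r + 1 => kS q lam α δ μ r +
      lam * ((q ^ (2 * r) * δ) * (q ^ (2 * r) * δ - aS q lam α δ r))

end Seq

section Act
variable {K : Type*} [Field K] (q : K)
variable {N : Type*} [AddCommGroup N] [Module K N] [Module (REA q)ᵐᵒᵖ N]
  [IsScalarTower K (REA q)ᵐᵒᵖ N]

lemma act_smul (x : REA q) (k : K) (w : N) : op x • (k • w) = k • (op x • w) := by
  rw [← smul_one_smul (REA q)ᵐᵒᵖ k w, ← mul_smul, mul_smul_comm, mul_one, smul_assoc]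

lemma act_ksmul (k : K) (x : REA q) (w : N) : op (k • x) • w = k • (op x • w) := by
  rw [op_smul, smul_assoc]

lemma step_d (x : N) (e : K) (hx : op (u22 q) • x = e • x) :
    op (u22 q) • (op (u21 q) • x) = (q ^ 2 * e) • (op (u21 q) • x) := by
  rw [← act_mul, rel_cd, act_ksmul, act_mul, hx, act_smul, smul_smul]

lemma step_a (x : N) (e f : K) (hxa : op (u11 q) • x = e • x)
    (hxd : op (u22 q) • x = f • x) :
    op (u11 q) • (op (u21 q) • x) = (e + (q⁻¹ ^ 2 - 1) * f) • (op (u21 q) • x) := by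
  rw [← act_mul, rel_ca, act_mul, act_add, act_ksmul, hxa, hxd, smul_smul,
    ← add_smul, act_smul]

lemma step_b (x : N) (e f : K) (hxa : op (u11 q) • x = e • x)
    (hxd : op (u22 q) • x = f • x) :
    op (u12 q) • (op (u21 q) • x) =
      op (u21 q) • (op (u12 q) • x) + ((q⁻¹ ^ 2 - 1) * (f * (f - e))) • x := by
  rw [← act_mul, rel_cb, act_add, act_mul, act_ksmul, act_mul, hxd, act_smul, act_sub,
    hxa, hxd, ← sub_smul, smul_smul, smul_smul, smul_smul, mul_assoc]

variable (v : N) (α δ μ : K)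
variable (hva : op (u11 q) • v = α • v) (hvd : op (u22 q) • v = δ • v)
variable (hvbc : op (u12 q * u21 q) • v = μ • v)

lemma vr_succ (r : ℕ) :
    op (u21 q ^ (r + 1)) • v = op (u21 q) • (op (u21 q ^ r) • v) := by
  rw [pow_succ, act_mul]

include hvd in
lemma vr_d (r : ℕ) :
    op (u22 q) • (op (u21 q ^ r) • v) = (q ^ (2 * r) * δ) • (op (u21 q ^ r) • v) := by
  induction r with
  | zero => simpa [act_one] using hvd
  | succ r ih =>
      rw [vr_succ, step_d q _ _ ih, smul_smul]
      congr 1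
      ring

include hva hvd in
lemma vr_a (r : ℕ) :
    op (u11 q) • (op (u21 q ^ r) • v) =
      aS q (q⁻¹ ^ 2 - 1) α δ r • (op (u21 q ^ r) • v) := by
  induction r with
  | zero => simpa [act_one, aS] using hva
  | succ r ih =>
      rw [vr_succ, step_a q _ _ _ ih (vr_d q v δ hvd r)]
      congr 1

include hva hvd hvbc in
lemma vr_b (r : ℕ) :
    op (u12 q) • (op (u21 q ^ (r + 1)) • v) =
      kS q (q⁻¹ ^ 2 - 1) α δ μ (r + 1) • (op (u21 q ^ r) • v) := by
  induction r with
  | zero =>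
      simp only [zero_add, pow_one, pow_zero, act_one]
      rw [step_b q _ _ _ hva hvd]
      rw [show op (u21 q) • op (u12 q) • v = op (u12 q * u21 q) • v from (act_mul _ _ _).symm,
        hvbc]
      rw [← add_smul]
      congr 1
      simp only [kS, aS, mul_zero, pow_zero, one_mul]
  | succ r ih =>
      rw [vr_succ q v (r+1),
        step_b q _ _ _ (vr_a q v α δ hva hvd (r+1)) (vr_d q v δ hvd (r+1)), ih,
        act_smul, ← vr_succ, ← add_smul]
      congr 1

end Act

section Comm
variable {K : Type*} [Field K] (q : K)

lemma comm_a_bc : u11 q * (u12 q * u21 q) = (u12 q * u21 q) * u11 q := by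
  rw [← mul_assoc, rel_ab, mul_assoc, ← rel_ca, ← mul_assoc]

lemma comm_d_bc : u22 q * (u12 q * u21 q) = (u12 q * u21 q) * u22 q := by
  rw [← mul_assoc, rel_db, smul_mul_assoc, mul_assoc, mul_assoc, rel_cd, mul_smul_comm]

end Comm

section CommonEigen

lemma exists_common_eigenvector {K2 V : Type*} [Field K2] [IsAlgClosed K2] [AddCommGroup V]
    [Module K2 V] [FiniteDimensional K2 V] [Nontrivial V] (f g h : Module.End K2 V)
    (hfg : ∀ x, f (g x) = g (f x)) (hfh : ∀ x, f (h x) = h (f x))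
    (hgh : ∀ x, g (h x) = h (g x)) :
    ∃ v : V, v ≠ 0 ∧ (∃ a : K2, f v = a • v) ∧ (∃ b : K2, g v = b • v) ∧ (∃ c : K2, h v = c • v) := by
  obtain ⟨a, ha⟩ := Module.End.exists_eigenvalue f
  have hgE : ∀ x ∈ f.eigenspace a, g x ∈ f.eigenspace a := by
    intro x hx
    rw [Module.End.mem_eigenspace_iff] at hx ⊢
    rw [hfg, hx, map_smul]
  have hhE : ∀ x ∈ f.eigenspace a, h x ∈ f.eigenspace a := by
    intro x hx
    rw [Module.End.mem_eigenspace_iff] at hx ⊢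
    rw [hfh, hx, map_smul]
  haveI : Nontrivial (f.eigenspace a) := Submodule.nontrivial_iff_ne_bot.mpr ha
  set g1 : Module.End K2 (f.eigenspace a) := g.restrict hgE with hg1
  set h1 : Module.End K2 (f.eigenspace a) := h.restrict hhE with hh1
  obtain ⟨b, hb⟩ := Module.End.exists_eigenvalue g1
  have hhE2 : ∀ x ∈ g1.eigenspace b, h1 x ∈ g1.eigenspace b := by
    intro x hx
    rw [Module.End.mem_eigenspace_iff] at hx ⊢
    have comm1 : g1 (h1 x) = h1 (g1 x) := by
      apply Subtype.ext
      simp only [hg1, hh1, LinearMap.restrict_coe_apply]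
      exact (hgh _).symm ▸ rfl
    rw [comm1, hx, map_smul]
  haveI : Nontrivial (g1.eigenspace b) := Submodule.nontrivial_iff_ne_bot.mpr hb
  set h2 : Module.End K2 (g1.eigenspace b) := h1.restrict hhE2 with hh2
  obtain ⟨c, hc⟩ := Module.End.exists_eigenvalue h2
  obtain ⟨w, hw⟩ := hc.exists_hasEigenvector
  refine ⟨((w : g1.eigenspace b) : f.eigenspace a), ?_, ⟨a, ?_⟩, ⟨b, ?_⟩, ⟨c, ?_⟩⟩
  · simpa using hw.right
  · exact Module.End.mem_eigenspace_iff.mp w.1.2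
  · have := Module.End.mem_eigenspace_iff.mp w.2
    have := congrArg (Subtype.val) this
    simpa [hg1, LinearMap.restrict_coe_apply] using this
  · have h0 := Module.End.mem_eigenspace_iff.mp hw.left
    have := congrArg (fun y : g1.eigenspace b => (y.1.1 : V)) h0
    simpa [hh2, hh1, LinearMap.restrict_coe_apply] using this

end CommonEigen

section Closure
variable {K : Type*} [Field K] (q : K)
variable {N : Type*} [AddCommGroup N] [Module K N] [Module (REA q)ᵐᵒᵖ N]
  [IsScalarTower K (REA q)ᵐᵒᵖ N]

lemma gen_closure (W : Submodule K N)
    (h11 : ∀ w ∈ W, op (u11 q) • w ∈ W) (h12 : ∀ w ∈ W, op (u12 q) • w ∈ W)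
    (h21 : ∀ w ∈ W, op (u21 q) • w ∈ W) (h22 : ∀ w ∈ W, op (u22 q) • w ∈ W) :
    ∀ x : REA q, ∀ w ∈ W, op x • w ∈ W := by
  intro x
  obtain ⟨y, rfl⟩ := RingQuot.mkAlgHom_surjective K (REArel q) x
  induction y using FreeAlgebra.induction with
  | grade0 k =>
      intro w hw
      rw [AlgHom.commutes, ← MulOpposite.algebraMap_apply, algebraMap_smul]
      exact W.smul_mem k hw
  | grade1 i =>
      fin_cases i
      · exact h11
      · exact h12
      · exact h21
      · exact h22
  | mul x y ihx ihy =>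
      intro w hw
      rw [map_mul, act_mul]
      exact ihy _ (ihx _ hw)
  | add x y ihx ihy =>
      intro w hw
      rw [map_add, act_add]
      exact W.add_mem (ihx _ hw) (ihy _ hw)

end Closure

section Key
variable {K : Type*} [Field K] (q : K)
variable {N : Type*} [AddCommGroup N] [Module K N] [Module (REA q)ᵐᵒᵖ N]
  [IsScalarTower K (REA q)ᵐᵒᵖ N]

/-- The action of `op x` as a `K`-linear endomorphism. -/
def actL (x : REA q) : N →ₗ[K] N where
  toFun w := op x • w
  map_add' a b := smul_add _ a b
  map_smul' k w := act_smul q x k w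

@[simp] lemma actL_apply (x : REA q) (w : N) : actL q x w = op x • w := rfl

lemma key [IsSimpleModule (REA q)ᵐᵒᵖ N] [FiniteDimensional K N]
    (hq0 : q ≠ 0) (n : ℕ) (hn1 : 1 ≤ n)
    (hqn : ∀ k : ℕ, 1 ≤ k → k < n → q ^ (2 * k) ≠ 1)
    (hu22 : Function.Injective fun x : N => op (u22 q) • x)
    (β : K) (hβ : β ≠ 0) (v : N) (hv : v ≠ 0) (α δ μ : K)
    (hva : op (u11 q) • v = α • v) (hvd : op (u22 q) • v = δ • v)
    (hvbc : op (u12 q * u21 q) • v = μ • v) (hvn : op (u21 q ^ n) • v = β • v) :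
    ∃ b : Module.Basis (Fin n) K N, ∀ r : Fin n, b r = op (u21 q ^ (r : ℕ)) • v := by
  set lam : K := q⁻¹ ^ 2 - 1 with hlam
  set w : Fin n → N := fun r => op (u21 q ^ (r : ℕ)) • v with hw
  -- δ ≠ 0
  have hδ : δ ≠ 0 := by
    intro h
    apply hv
    apply hu22
    show op (u22 q) • v = op (u22 q) • 0
    rw [hvd, h, zero_smul, smul_zero]
  -- the vectors are nonzero
  have hwnz : ∀ r : ℕ, r ≤ n → op (u21 q ^ r) • v ≠ 0 := by
    intro r hr h0
    have h1 : u21 q ^ n = u21 q ^ r * u21 q ^ (n - r) := by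
      rw [← pow_add, Nat.add_sub_cancel' hr]
    have h2 : op (u21 q ^ n) • v = 0 := by rw [h1, act_mul, h0, smul_zero]
    rw [hvn] at h2
    exact hv ((smul_eq_zero.mp h2).resolve_left hβ)
  -- injectivity of the eigenvalue function
  have key2 : ∀ r s : ℕ, r ≤ s → s < n → q ^ (2 * r) = q ^ (2 * s) → r = s := by
    intro r s hrs hsn he
    by_contra hne
    apply hqn (s - r) (by omega) (by omega)
    have h3 : q ^ (2 * r) * q ^ (2 * (s - r)) = q ^ (2 * r) * 1 := by
      rw [mul_one, ← pow_add, show 2 * r + 2 * (s - r) = 2 * s by omega, he]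
    exact mul_left_cancel₀ (pow_ne_zero _ hq0) h3
  have hinj : Function.Injective fun r : Fin n => q ^ (2 * (r : ℕ)) * δ := by
    intro r s h
    have he : q ^ (2 * (r : ℕ)) = q ^ (2 * (s : ℕ)) := mul_right_cancel₀ hδ h
    rcases le_total (r : ℕ) (s : ℕ) with hle | hle
    · exact Fin.ext (key2 _ _ hle s.2 he)
    · exact (Fin.ext (key2 _ _ hle r.2 he.symm)).symm
  -- linear independence
  have hli : LinearIndependent K w := by
    apply Module.End.eigenvectors_linearIndependent' (actL q (u22 q))
      (fun r : Fin n => q ^ (2 * (r : ℕ)) * δ) hinj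
    intro r
    constructor
    · rw [Module.End.mem_eigenspace_iff]
      exact vr_d q v δ hvd (r : ℕ)
    · exact hwnz (r : ℕ) (le_of_lt r.2)
  -- the span
  set W : Submodule K N := Submodule.span K (Set.range w) with hWdef
  have hmem : ∀ r : Fin n, w r ∈ W := fun r => Submodule.subset_span ⟨r, rfl⟩
  have hmemv : v ∈ W := by
    have := hmem ⟨0, hn1⟩
    simpa [hw, act_one] using this
  have h22W : ∀ u ∈ W, op (u22 q) • u ∈ W := by
    have : W ≤ W.comap (actL q (u22 q)) := by
      rw [hWdef]
      apply Submodule.span_le.mpr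
      rintro _ ⟨r, rfl⟩
      show op (u22 q) • _ ∈ W
      rw [hw]
      rw [vr_d q v δ hvd (r : ℕ)]
      exact W.smul_mem _ (hmem r)
    exact fun u hu => this hu
  have h11W : ∀ u ∈ W, op (u11 q) • u ∈ W := by
    have : W ≤ W.comap (actL q (u11 q)) := by
      rw [hWdef]
      apply Submodule.span_le.mpr
      rintro _ ⟨r, rfl⟩
      show op (u11 q) • _ ∈ W
      rw [hw]
      rw [vr_a q v α δ hva hvd (r : ℕ)]
      exact W.smul_mem _ (hmem r)
    exact fun u hu => this hu
  have h21W : ∀ u ∈ W, op (u21 q) • u ∈ W := by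
    have : W ≤ W.comap (actL q (u21 q)) := by
      rw [hWdef]
      apply Submodule.span_le.mpr
      rintro _ ⟨r, rfl⟩
      show op (u21 q) • _ ∈ W
      simp only [hw]
      rw [← vr_succ]
      rcases Nat.lt_or_ge ((r : ℕ) + 1) n with hlt | hge
      · have := hmem ⟨(r : ℕ) + 1, hlt⟩
        simpa [hw] using this
      · have heq : (r : ℕ) + 1 = n := by omega
        rw [heq, hvn]
        exact W.smul_mem _ hmemv
    exact fun u hu => this hu
  have h12W : ∀ u ∈ W, op (u12 q) • u ∈ W := by
    have : W ≤ W.comap (actL q (u12 q)) := by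
      rw [hWdef]
      apply Submodule.span_le.mpr
      rintro _ ⟨r, rfl⟩
      show op (u12 q) • _ ∈ W
      simp only [hw]
      rcases Nat.eq_zero_or_pos (r : ℕ) with h0 | hpos
      · rw [h0]
        have hveq : v = β⁻¹ • (op (u21 q ^ n) • v) := by
          rw [hvn, smul_smul, inv_mul_cancel₀ hβ, one_smul]
        rw [pow_zero, act_one]
        rw [hveq, act_smul]
        have hnn : n = (n - 1) + 1 := by omega
        rw [hnn, vr_b q v α δ μ hva hvd hvbc (n - 1)]
        rw [smul_smul]
        exact W.smul_mem _ (hmem ⟨n - 1, by omega⟩)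
      · obtain ⟨s, hs⟩ : ∃ s : ℕ, (r : ℕ) = s + 1 := ⟨(r : ℕ) - 1, by omega⟩
        rw [hs, vr_b q v α δ μ hva hvd hvbc s]
        apply W.smul_mem
        have := hmem ⟨s, by omega⟩
        simpa [hw] using this
    exact fun u hu => this hu
  have hcl := gen_closure q W h11W h12W h21W h22W
  set W' : Submodule (REA q)ᵐᵒᵖ N :=
    { carrier := (W : Set N)
      add_mem' := fun h1 h2 => W.add_mem h1 h2
      zero_mem' := W.zero_mem
      smul_mem' := fun c {x} hx => by
        rw [← MulOpposite.op_unop c]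
        exact hcl (unop c) x hx } with hW'
  have hvW' : v ∈ W' := hmemv
  have htop : W' = ⊤ := by
    rcases eq_bot_or_eq_top W' with hbot | htop
    · rw [hbot] at hvW'
      exact absurd (by simpa using hvW') hv
    · exact htop
  have hsp : ⊤ ≤ Submodule.span K (Set.range w) := by
    intro x _
    have hx : x ∈ W' := by rw [htop]; trivial
    exact hx
  exact ⟨Module.Basis.mk hli hsp, fun r => Module.Basis.mk_apply hli hsp r⟩

end Key


theorem REA_simple_u22torsionfree_u21_nonnilpotent_dim'
    [IsAlgClosed K] (q : K) (m n : ℕ) (hm : 0 < m)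
    (hq1 : q ^ m = 1) (hq2 : ∀ k : ℕ, 1 ≤ k → k < m → q ^ k ≠ 1)
    (hn : n = if Odd m then m else m / 2)
    (N : Type*) [AddCommGroup N] [Module K N] [Module (REA q)ᵐᵒᵖ N]
    [IsScalarTower K (REA q)ᵐᵒᵖ N] [IsSimpleModule (REA q)ᵐᵒᵖ N]
    [FiniteDimensional K N]
    (hu22 : Function.Injective fun x : N => op (u22 q) • x)
    (β : K) (hβ : β ≠ 0) (hu21n : ∀ x : N, op (u21 q ^ n) • x = β • x) :
    Module.finrank K N = n ∧
    ∀ v : N, v ≠ 0 →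
      (∃ c : K, op (u11 q) • v = c • v) → (∃ c : K, op (u22 q) • v = c • v) →
      (∃ c : K, op (u12 q * u21 q) • v = c • v) → (∃ c : K, op (u12 q ^ n) • v = c • v) →
      (∃ c : K, op (u21 q ^ n) • v = c • v) →
      ∃ b : Module.Basis (Fin n) K N, ∀ r : Fin n, b r = op (u21 q ^ (r : ℕ)) • v := by
  have hq0 : q ≠ 0 := by
    intro h
    rw [h] at hq1
    simp [zero_pow hm.ne'] at hq1
  have hn1 : 1 ≤ n := by
    by_cases hodd : Odd m
    · rw [hn, if_pos hodd]; omega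
    · have heven : Even m := Nat.not_odd_iff_even.mp hodd
      rcases heven with ⟨t, ht⟩
      rw [hn, if_neg hodd]
      omega
  have hqn : ∀ k : ℕ, 1 ≤ k → k < n → q ^ (2 * k) ≠ 1 := by
    intro k hk1 hkn hcontra
    by_cases hodd : Odd m
    · rw [hn, if_pos hodd] at hkn
      rcases Nat.lt_or_ge (2 * k) m with h | h
      · exact hq2 (2 * k) (by omega) h hcontra
      · have h2 : 2 * k - m < m := by omega
        have h3 : q ^ (2 * k) = q ^ (2 * k - m) * q ^ m := by
          rw [← pow_add]
          congr 1
          omega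
        rw [hq1, mul_one] at h3
        have hq' : q ^ (2 * k - m) = 1 := by rw [← h3]; exact hcontra
        rcases Nat.eq_zero_or_pos (2 * k - m) with hz | hp
        · rcases hodd with ⟨j, hj⟩
          omega
        · exact hq2 _ (by omega) h2 hq'
    · have heven : Even m := Nat.not_odd_iff_even.mp hodd
      rcases heven with ⟨t, ht⟩
      rw [hn, if_neg hodd] at hkn
      exact hq2 (2 * k) (by omega) (by omega) hcontra
  haveI : Nontrivial N := IsSimpleModule.nontrivial (REA q)ᵐᵒᵖ N
  -- find a common eigenvector
  obtain ⟨v, hv, ⟨α, hva⟩, ⟨δ, hvd⟩, ⟨μ, hvbc⟩⟩ :=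
    exists_common_eigenvector (K2 := K) (V := N) (actL q (u11 q)) (actL q (u22 q)) (actL q (u12 q * u21 q))
      (fun x => by
        show op (u11 q) • (op (u22 q) • x) = op (u22 q) • (op (u11 q) • x)
        rw [← act_mul, ← act_mul, rel_ad])
      (fun x => by
        show op (u11 q) • (op (u12 q * u21 q) • x) = op (u12 q * u21 q) • (op (u11 q) • x)
        rw [← act_mul, ← act_mul, comm_a_bc])
      (fun x => by
        show op (u22 q) • (op (u12 q * u21 q) • x) = op (u12 q * u21 q) • (op (u22 q) • x)
        rw [← act_mul, ← act_mul, comm_d_bc])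
  have hva' : op (u11 q) • v = α • v := hva
  have hvd' : op (u22 q) • v = δ • v := hvd
  have hvbc' : op (u12 q * u21 q) • v = μ • v := hvbc
  obtain ⟨b, hb⟩ := key q hq0 n hn1 hqn hu22 β hβ v hv α δ μ hva' hvd' hvbc' (hu21n v)
  constructor
  · rw [Module.finrank_eq_card_basis b, Fintype.card_fin]
  · intro v' hv' h1 h2 h3 _ _
    obtain ⟨α', hva'⟩ := h1
    obtain ⟨δ', hvd'⟩ := h2
    obtain ⟨μ', hvbc'⟩ := h3
    exact key q hq0 n hn1 hqn hu22 β hβ v' hv' α' δ' μ' hva' hvd' hvbc' (hu21n v')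

/-- Let `q` be a primitive `m`-th root of unity, `n = m` for `m` odd and
`n = m/2` for `m` even, and let `N` be a finite-dimensional simple right `A_q(M₂)`-module
on which `u22` acts injectively and on which the central element `u21^n` acts as
multiplication by a nonzero scalar `β`. Then `dim_K N = n`, and for every common
eigenvector `v` of `u11, u22, u12·u21, u12^n, u21^n` the vectors `v, v·u21, …, v·u21^{n−1}`
form a `K`-basis of `N`. -/
theorem REA_simple_u22torsionfree_u21_nonnilpotent_dim
    [IsAlgClosed K] (q : K) (m n : ℕ) (hm : 0 < m)
    (hq1 : q ^ m = 1) (hq2 : ∀ k : ℕ, 1 ≤ k → k < m → q ^ k ≠ 1)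
    (hn : n = if Odd m then m else m / 2)
    (N : Type*) [AddCommGroup N] [Module K N] [Module (REA q)ᵐᵒᵖ N]
    [IsScalarTower K (REA q)ᵐᵒᵖ N] [IsSimpleModule (REA q)ᵐᵒᵖ N]
    [FiniteDimensional K N]
    (hu22 : Function.Injective fun x : N => op (u22 q) • x)
    (β : K) (hβ : β ≠ 0) (hu21n : ∀ x : N, op (u21 q ^ n) • x = β • x) :
    Module.finrank K N = n ∧
    ∀ v : N, v ≠ 0 →
      (∃ c : K, op (u11 q) • v = c • v) → (∃ c : K, op (u22 q) • v = c • v) →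
      (∃ c : K, op (u12 q * u21 q) • v = c • v) → (∃ c : K, op (u12 q ^ n) • v = c • v) →
      (∃ c : K, op (u21 q ^ n) • v = c • v) →
      ∃ b : Module.Basis (Fin n) K N, ∀ r : Fin n, b r = op (u21 q ^ (r : ℕ)) • v :=
  REA_simple_u22torsionfree_u21_nonnilpotent_dim' q m n hm hq1 hq2 hn N hu22 β hβ hu21n
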